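/- If (K, H) is a connection on a differential bundle 𝗊, then (cT(K), (c × 1)T(H)c) is a connection on the differential bundle T(𝗊). -/

import Mathlib

open CategoryTheory CategoryTheory.Limits

open scoped Classical

universe v u

variable {C : Type u} [Category.{v} C]

/-- Chosen pullback: explicit pullback data for a cospan `f : A ⟶ Z ⟵ B : g`. -/
structure ChosenPB {A B Z : C} (f : A ⟶ Z) (g : B ⟶ Z) where
  P : C
  pr0 : P ⟶ A
  pr1 : P ⟶ B
  comm : pr0 ≫ f = pr1 ≫ g
  pair : ∀ {X : C} (u : X ⟶ A) (v : X ⟶ B), u ≫ f = v ≫ g → (X ⟶ P)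
  pair_pr0 : ∀ {X : C} (u : X ⟶ A) (v : X ⟶ B) (h : u ≫ f = v ≫ g),
    pair u v h ≫ pr0 = u
  pair_pr1 : ∀ {X : C} (u : X ⟶ A) (v : X ⟶ B) (h : u ≫ f = v ≫ g),
    pair u v h ≫ pr1 = v
  hom_ext : ∀ {X : C} (w w' : X ⟶ P),
    w ≫ pr0 = w' ≫ pr0 → w ≫ pr1 = w' ≫ pr1 → w = w'

/-- Witness that the endofunctor `T` preserves the chosen pullback `PB`. -/
structure PBLift (T : C ⥤ C) {A B Z : C} {f : A ⟶ Z} {g : B ⟶ Z} (PB : ChosenPB f g) where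
  pair : ∀ {X : C} (u : X ⟶ T.obj A) (v : X ⟶ T.obj B),
    u ≫ T.map f = v ≫ T.map g → (X ⟶ T.obj PB.P)
  pair_pr0 : ∀ {X : C} (u : X ⟶ T.obj A) (v : X ⟶ T.obj B)
    (h : u ≫ T.map f = v ≫ T.map g), pair u v h ≫ T.map PB.pr0 = u
  pair_pr1 : ∀ {X : C} (u : X ⟶ T.obj A) (v : X ⟶ T.obj B)
    (h : u ≫ T.map f = v ≫ T.map g), pair u v h ≫ T.map PB.pr1 = v
  hom_ext : ∀ {X : C} (w w' : X ⟶ T.obj PB.P),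
    w ≫ T.map PB.pr0 = w' ≫ T.map PB.pr0 → w ≫ T.map PB.pr1 = w' ≫ T.map PB.pr1 → w = w'

/-- The image of a preserved chosen pullback is again a chosen pullback. -/
def PBLift.toChosenPB {T : C ⥤ C} {A B Z : C} {f : A ⟶ Z} {g : B ⟶ Z} {PB : ChosenPB f g}
    (L : PBLift T PB) : ChosenPB (T.map f) (T.map g) where
  P := T.obj PB.P
  pr0 := T.map PB.pr0
  pr1 := T.map PB.pr1
  comm := by rw [← T.map_comp, ← T.map_comp, PB.comm]
  pair := L.pair
  pair_pr0 := L.pair_pr0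
  pair_pr1 := L.pair_pr1
  hom_ext := L.hom_ext

/-- Iterated endofunctor `Tⁿ`. -/
def fpow (T : C ⥤ C) : ℕ → C ⥤ C
  | 0 => 𝟭 C
  | n + 1 => fpow T n ⋙ T

/-- A tangent category in the sense of Cockett–Cruttwell, presented with chosen
pullbacks `T₂M` of `p_M` along itself (preserved by each `Tⁿ`), addition `+`,
projection `p`, zero `0`, vertical lift `ℓ` and canonical flip `c`, together
with the universality of the vertical lift. Sums, associativity etc. are
expressed in generalized-element form via the chosen pullback pairings. -/
structure TangentCat (C : Type u) [Category.{v} C] where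
  T : C ⥤ C
  p : T ⟶ 𝟭 C
  zero : 𝟭 C ⟶ T
  l : T ⟶ T ⋙ T
  c : T ⋙ T ⟶ T ⋙ T
  T2 : ∀ M : C, ChosenPB (p.app M) (p.app M)
  T2T : ∀ M : C, PBLift T (T2 M)
  T2Tn : ∀ (M : C) (n : ℕ), PBLift (fpow T n) (T2 M)
  add : ∀ M : C, (T2 M).P ⟶ T.obj M
  add_nat : ∀ {M N : C} (f : M ⟶ N) {X : C} (u v : X ⟶ T.obj M)
    (h : u ≫ p.app M = v ≫ p.app M)
    (h' : (u ≫ T.map f) ≫ p.app N = (v ≫ T.map f) ≫ p.app N),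
    (T2 M).pair u v h ≫ add M ≫ T.map f
      = (T2 N).pair (u ≫ T.map f) (v ≫ T.map f) h' ≫ add N
  zero_p : ∀ M : C, zero.app M ≫ p.app M = 𝟙 M
  add_p : ∀ M : C, add M ≫ p.app M = (T2 M).pr0 ≫ p.app M
  add_comm' : ∀ (M : C) {X : C} (f g : X ⟶ T.obj M) (h : f ≫ p.app M = g ≫ p.app M),
    (T2 M).pair f g h ≫ add M = (T2 M).pair g f h.symm ≫ add M
  add_assoc' : ∀ (M : C) {X : C} (f g k : X ⟶ T.obj M)
    (h1 : f ≫ p.app M = g ≫ p.app M) (h2 : g ≫ p.app M = k ≫ p.app M)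
    (h3 : ((T2 M).pair f g h1 ≫ add M) ≫ p.app M = k ≫ p.app M)
    (h4 : f ≫ p.app M = ((T2 M).pair g k h2 ≫ add M) ≫ p.app M),
    (T2 M).pair ((T2 M).pair f g h1 ≫ add M) k h3 ≫ add M
      = (T2 M).pair f ((T2 M).pair g k h2 ≫ add M) h4 ≫ add M
  add_zero' : ∀ (M : C) {X : C} (f : X ⟶ T.obj M)
    (h : f ≫ p.app M = (f ≫ p.app M ≫ zero.app M) ≫ p.app M),
    (T2 M).pair f (f ≫ p.app M ≫ zero.app M) h ≫ add M = f
  l_Tp : ∀ M : C, l.app M ≫ T.map (p.app M) = p.app M ≫ zero.app M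
  l_zero : ∀ M : C, zero.app M ≫ l.app M = zero.app M ≫ T.map (zero.app M)
  l_add : ∀ (M : C) {X : C} (f g : X ⟶ T.obj M) (h : f ≫ p.app M = g ≫ p.app M),
    ∃ w : X ⟶ T.obj (T2 M).P,
      w ≫ T.map (T2 M).pr0 = f ≫ l.app M ∧ w ≫ T.map (T2 M).pr1 = g ≫ l.app M ∧
      (T2 M).pair f g h ≫ add M ≫ l.app M = w ≫ T.map (add M)
  c_p : ∀ M : C, c.app M ≫ p.app (T.obj M) = T.map (p.app M)
  c_zero : ∀ M : C, T.map (zero.app M) ≫ c.app M = zero.app (T.obj M)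
  c_add : ∀ (M : C) {X : C} (u v : X ⟶ T.obj (T.obj M))
    (h : u ≫ T.map (p.app M) = v ≫ T.map (p.app M))
    (h' : (u ≫ c.app M) ≫ p.app (T.obj M) = (v ≫ c.app M) ≫ p.app (T.obj M)),
    ∃ w : X ⟶ T.obj (T2 M).P,
      w ≫ T.map (T2 M).pr0 = u ∧ w ≫ T.map (T2 M).pr1 = v ∧
      w ≫ T.map (add M) ≫ c.app M
        = (T2 (T.obj M)).pair (u ≫ c.app M) (v ≫ c.app M) h' ≫ add (T.obj M)
  l_c : ∀ M : C, l.app M ≫ c.app M = l.app M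
  c_c : ∀ M : C, c.app M ≫ c.app M = 𝟙 (T.obj (T.obj M))
  l_l : ∀ M : C, l.app M ≫ T.map (l.app M) = l.app M ≫ l.app (T.obj M)
  c_T_c : ∀ M : C, c.app (T.obj M) ≫ T.map (c.app M) ≫ c.app (T.obj M)
    = T.map (c.app M) ≫ c.app (T.obj M) ≫ T.map (c.app M)
  l_T_c : ∀ M : C, l.app (T.obj M) ≫ T.map (c.app M) ≫ c.app (T.obj M)
    = c.app M ≫ T.map (l.app M)
  vmu : ∀ M : C, (T2 M).P ⟶ T.obj (T.obj M)
  vmu_spec : ∀ M : C, ∃ w : (T2 M).P ⟶ T.obj (T2 M).P,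
    w ≫ T.map (T2 M).pr0 = (T2 M).pr0 ≫ l.app M ∧
    w ≫ T.map (T2 M).pr1 = (T2 M).pr1 ≫ zero.app (T.obj M) ∧
    vmu M = w ≫ T.map (add M)
  vlift : ∀ {X M : C} (f : X ⟶ T.obj (T.obj M)),
    f ≫ T.map (p.app M) = f ≫ T.map (p.app M) ≫ p.app M ≫ zero.app M → (X ⟶ (T2 M).P)
  vlift_vmu : ∀ {X M : C} (f : X ⟶ T.obj (T.obj M))
    (h : f ≫ T.map (p.app M) = f ≫ T.map (p.app M) ≫ p.app M ≫ zero.app M),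
    vlift f h ≫ vmu M = f
  vmu_mono : ∀ {X M : C} (w w' : X ⟶ (T2 M).P), w ≫ vmu M = w' ≫ vmu M → w = w'

/-- Negatives: each tangent bundle is a commutative group bundle. -/
structure HasNegatives {C : Type u} [Category.{v} C] (D : TangentCat C) where
  neg : ∀ M : C, D.T.obj M ⟶ D.T.obj M
  neg_p : ∀ M : C, neg M ≫ D.p.app M = D.p.app M
  neg_add : ∀ (M : C) {X : C} (f : X ⟶ D.T.obj M)
    (h : f ≫ D.p.app M = (f ≫ neg M) ≫ D.p.app M),
    (D.T2 M).pair f (f ≫ neg M) h ≫ D.add M = f ≫ D.p.app M ≫ D.zero.app M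

/-- Fibrewise sum of two maps into a tangent bundle (defined when the maps
agree under `p`; otherwise a default value). -/
noncomputable def TangentCat.hadd (D : TangentCat C) {X M : C}
    (f g : X ⟶ D.T.obj M) : X ⟶ D.T.obj M :=
  if h : f ≫ D.p.app M = g ≫ D.p.app M then (D.T2 M).pair f g h ≫ D.add M else f

/-- Fibrewise difference `f - g` of two maps into a tangent bundle. -/
noncomputable def TangentCat.sub (D : TangentCat C) (N : HasNegatives D) {X M : C}
    (f g : X ⟶ D.T.obj M) : X ⟶ D.T.obj M :=
  D.hadd f (g ≫ N.neg M)

/-- The bracketing operation `{f}` for the tangent bundle, obtained from the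
universality (equalizer property) of the vertical lift. -/
noncomputable def TangentCat.brkT (D : TangentCat C) {X M : C}
    (f : X ⟶ D.T.obj (D.T.obj M)) : X ⟶ D.T.obj M :=
  if h : f ≫ D.T.map (D.p.app M) = f ≫ D.T.map (D.p.app M) ≫ D.p.app M ≫ D.zero.app M
  then D.vlift f h ≫ (D.T2 M).pr0 else f ≫ D.p.app (D.T.obj M)

/-- The Lie bracket of vector fields: `[w₁,w₂] = {w₁T(w₂) − w₂T(w₁)c}`. -/
noncomputable def TangentCat.lie (D : TangentCat C) (N : HasNegatives D) {M : C}
    (w1 w2 : M ⟶ D.T.obj M) : M ⟶ D.T.obj M :=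
  D.brkT (D.sub N (w1 ≫ D.T.map w2) (w2 ≫ D.T.map w1 ≫ D.c.app M))

/-- A differential bundle `𝗊 = (q, +_q, 0_q, λ)` on `E` over `M` in the tangent
category `D`, with chosen pullbacks `E₂` (of `q` along itself) and
`T(M) ×_M E` (of `p_M` along `q`), both preserved by each `Tⁿ`, together with
the lift axioms and the universality of the lift (in equalizer form). -/
structure DiffBundle {C : Type u} [Category.{v} C] (D : TangentCat C) (E M : C) where
  q : E ⟶ M
  E2 : ChosenPB q q
  TE2 : PBLift D.T E2
  TE2n : ∀ n : ℕ, PBLift (fpow D.T n) E2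
  P : ChosenPB (D.p.app M) q
  TP : PBLift D.T P
  TPn : ∀ n : ℕ, PBLift (fpow D.T n) P
  addq : E2.P ⟶ E
  zeroq : M ⟶ E
  lam : E ⟶ D.T.obj E
  addq_q : addq ≫ q = E2.pr0 ≫ q
  zeroq_q : zeroq ≫ q = 𝟙 M
  addq_comm : ∀ {X : C} (f g : X ⟶ E) (h : f ≫ q = g ≫ q),
    E2.pair f g h ≫ addq = E2.pair g f h.symm ≫ addq
  addq_assoc : ∀ {X : C} (f g k : X ⟶ E)
    (h1 : f ≫ q = g ≫ q) (h2 : g ≫ q = k ≫ q)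
    (h3 : (E2.pair f g h1 ≫ addq) ≫ q = k ≫ q)
    (h4 : f ≫ q = (E2.pair g k h2 ≫ addq) ≫ q),
    E2.pair (E2.pair f g h1 ≫ addq) k h3 ≫ addq
      = E2.pair f (E2.pair g k h2 ≫ addq) h4 ≫ addq
  addq_zero : ∀ {X : C} (f : X ⟶ E) (h : f ≫ q = (f ≫ q ≫ zeroq) ≫ q),
    E2.pair f (f ≫ q ≫ zeroq) h ≫ addq = f
  lam_Tq : lam ≫ D.T.map q = q ≫ D.zero.app M
  lam_zero1 : zeroq ≫ lam = D.zero.app M ≫ D.T.map zeroq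
  lam_add1 : ∀ {X : C} (f g : X ⟶ E) (h : f ≫ q = g ≫ q),
    ∃ w : X ⟶ D.T.obj E2.P,
      w ≫ D.T.map E2.pr0 = f ≫ lam ∧ w ≫ D.T.map E2.pr1 = g ≫ lam ∧
      E2.pair f g h ≫ addq ≫ lam = w ≫ D.T.map addq
  lam_p : lam ≫ D.p.app E = q ≫ zeroq
  lam_zero2 : zeroq ≫ lam = zeroq ≫ D.zero.app E
  lam_add2 : ∀ {X : C} (f g : X ⟶ E) (h : f ≫ q = g ≫ q)
    (h' : (f ≫ lam) ≫ D.p.app E = (g ≫ lam) ≫ D.p.app E),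
    E2.pair f g h ≫ addq ≫ lam = (D.T2 E).pair (f ≫ lam) (g ≫ lam) h' ≫ D.add E
  lam_l : lam ≫ D.l.app E = lam ≫ D.T.map lam
  mu : E2.P ⟶ D.T.obj E
  mu_spec : ∃ w : E2.P ⟶ D.T.obj E2.P,
    w ≫ D.T.map E2.pr0 = E2.pr0 ≫ lam ∧
    w ≫ D.T.map E2.pr1 = E2.pr1 ≫ D.zero.app E ∧
    mu = w ≫ D.T.map addq
  muLift : ∀ {X : C} (f : X ⟶ D.T.obj E),
    f ≫ D.T.map q = f ≫ D.p.app E ≫ q ≫ D.zero.app M → (X ⟶ E2.P)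
  muLift_mu : ∀ {X : C} (f : X ⟶ D.T.obj E)
    (h : f ≫ D.T.map q = f ≫ D.p.app E ≫ q ≫ D.zero.app M),
    muLift f h ≫ mu = f
  muLift_q : ∀ {X : C} (f : X ⟶ D.T.obj E)
    (h : f ≫ D.T.map q = f ≫ D.p.app E ≫ q ≫ D.zero.app M),
    muLift f h ≫ E2.pr0 ≫ q = f ≫ D.p.app E ≫ q
  mu_mono : ∀ {X : C} (w w' : X ⟶ E2.P), w ≫ mu = w' ≫ mu → w = w'

/-- The bracketing operation `{f}` for a differential bundle. -/
noncomputable def DiffBundle.brk {D : TangentCat C} {E M : C} (B : DiffBundle D E M)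
    {X : C} (f : X ⟶ D.T.obj E) : X ⟶ E :=
  if h : f ≫ D.T.map B.q = f ≫ D.p.app E ≫ B.q ≫ D.zero.app M
  then B.muLift f h ≫ B.E2.pr0 else f ≫ D.p.app E

/-- Negatives for a differential bundle (the fibrewise group structure). -/
structure BundleNegatives {D : TangentCat C} {E M : C} (B : DiffBundle D E M) where
  neg : E ⟶ E
  neg_q : neg ≫ B.q = B.q
  neg_add : ∀ {X : C} (f : X ⟶ E) (h : f ≫ B.q = (f ≫ neg) ≫ B.q),
    B.E2.pair f (f ≫ neg) h ≫ B.addq = f ≫ B.q ≫ B.zeroq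

/-- Fibrewise sum of maps into `E` for the bundle addition `+_q`. -/
noncomputable def DiffBundle.qadd {D : TangentCat C} {E M : C} (B : DiffBundle D E M)
    {X : C} (f g : X ⟶ E) : X ⟶ E :=
  if h : f ≫ B.q = g ≫ B.q then B.E2.pair f g h ≫ B.addq else f

/-- Fibrewise difference of maps into `E` for the bundle addition `+_q`. -/
noncomputable def DiffBundle.qsub {D : TangentCat C} {E M : C} (B : DiffBundle D E M)
    (NB : BundleNegatives B) {X : C} (f g : X ⟶ E) : X ⟶ E :=
  B.qadd f (g ≫ NB.neg)

/-- The horizontal descent `U = ⟨T(q), p⟩ : T(E) ⟶ T(M) ×_M E`. -/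
def TangentCat.hdesc (D : TangentCat C) {E M : C} (q : E ⟶ M)
    (P : ChosenPB (D.p.app M) q) : D.T.obj E ⟶ P.P :=
  P.pair (D.T.map q) (D.p.app E) (by simpa using D.p.naturality q)

/-- A vertical connection on the differential bundle with projection `q` and
lift `lam`: a retraction `K` of `lam` with `Kq = pq`, `Kλ = ℓT(K)` and
`Kλ = T(λ)cT(K)` (equivalently, `(K,p)` and `(K,q)` are linear bundle
morphisms). -/
def IsVerticalConnection (D : TangentCat C) {E M : C} (q : E ⟶ M)
    (lam : E ⟶ D.T.obj E) (K : D.T.obj E ⟶ E) : Prop :=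
  lam ≫ K = 𝟙 E ∧
  K ≫ q = D.p.app E ≫ q ∧
  K ≫ lam = D.l.app E ≫ D.T.map K ∧
  K ≫ lam = D.T.map lam ≫ D.c.app E ≫ D.T.map K

/-- Flatness of a vertical connection: `cT(K)K = T(K)K`. -/
def IsFlat (D : TangentCat C) {E : C} (K : D.T.obj E ⟶ E) : Prop :=
  D.c.app E ≫ D.T.map K ≫ K = D.T.map K ≫ K

/-- A horizontal connection on the differential bundle with projection `q`,
lift `lam` and horizontal pullback `P = T(M) ×_M E`: a section `H` of the
horizontal descent `U = ⟨T(q),p⟩` with `Hℓ = (ℓ×0)T(H)` and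
`HT(λ)c = (0×λ)T(H)` (equivalently, `(H,1)` is linear into `p_E` and into
`T(𝗊)`). -/
def IsHorizontalConnection (D : TangentCat C) {E M : C} (q : E ⟶ M)
    (lam : E ⟶ D.T.obj E) (P : ChosenPB (D.p.app M) q)
    (H : P.P ⟶ D.T.obj E) : Prop :=
  H ≫ D.T.map q = P.pr0 ∧
  H ≫ D.p.app E = P.pr1 ∧
  (∃ w : P.P ⟶ D.T.obj P.P,
    w ≫ D.T.map P.pr0 = P.pr0 ≫ D.l.app M ∧
    w ≫ D.T.map P.pr1 = P.pr1 ≫ D.zero.app E ∧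
    H ≫ D.l.app E = w ≫ D.T.map H) ∧
  (∃ w : P.P ⟶ D.T.obj P.P,
    w ≫ D.T.map P.pr0 = P.pr0 ≫ D.zero.app (D.T.obj M) ∧
    w ≫ D.T.map P.pr1 = P.pr1 ≫ lam ∧
    H ≫ D.T.map lam ≫ D.c.app E = w ≫ D.T.map H)

/-- A (full) connection, in unbundled form: a vertical connection `K` and a
horizontal connection `H` with `HK = π₁q0_q` and `⟨K,p⟩μ + UH = 1`. -/
noncomputable def IsConnectionPair (D : TangentCat C) {E M : C} (q : E ⟶ M)
    (lam : E ⟶ D.T.obj E) (EP : ChosenPB q q) (zeroq : M ⟶ E)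
    (mu : EP.P ⟶ D.T.obj E) (P : ChosenPB (D.p.app M) q)
    (K : D.T.obj E ⟶ E) (H : P.P ⟶ D.T.obj E) : Prop :=
  IsVerticalConnection D q lam K ∧
  IsHorizontalConnection D q lam P H ∧
  H ≫ K = P.pr1 ≫ q ≫ zeroq ∧
  ∃ R : D.T.obj E ⟶ EP.P, R ≫ EP.pr0 = K ∧ R ≫ EP.pr1 = D.p.app E ∧
    D.hadd (R ≫ mu) (D.hdesc q P ≫ H) = 𝟙 (D.T.obj E)

/-- A connection on a differential bundle. -/
noncomputable def IsConnection {D : TangentCat C} {E M : C} (B : DiffBundle D E M)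
    (K : D.T.obj E ⟶ E) (H : B.P.P ⟶ D.T.obj E) : Prop :=
  IsConnectionPair D B.q B.lam B.E2 B.zeroq B.mu B.P K H

/-- A Finsler connection on a differential bundle. -/
def IsFinslerConnection {D : TangentCat C} {E M : C} (B : DiffBundle D E M)
    (R : D.T.obj E ⟶ B.E2.P) : Prop :=
  B.mu ≫ R = 𝟙 B.E2.P ∧
  R ≫ B.E2.pr1 = D.p.app E ∧
  R ≫ B.E2.pr0 ≫ B.lam = D.T.map B.lam ≫ D.c.app E ≫ D.T.map (R ≫ B.E2.pr0) ∧
  D.l.app E ≫ D.T.map (R ≫ B.E2.pr0) = R ≫ B.E2.pr0 ≫ B.lam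

/-- The covariant derivative `∇_K(w,s) = wT(s)K`. -/
def nabla (D : TangentCat C) {E M : C} (K : D.T.obj E ⟶ E)
    (w : M ⟶ D.T.obj M) (s : M ⟶ E) : M ⟶ E :=
  w ≫ D.T.map s ≫ K


/-! ### Auxiliary lemmas for Statement 13 -/

theorem ChosenPB.pair_congr {A B Z : C} {f : A ⟶ Z} {g : B ⟶ Z} (PB : ChosenPB f g)
    {X : C} {u u' : X ⟶ A} {v v' : X ⟶ B} (hu : u = u') (hv : v = v')
    (h : u ≫ f = v ≫ g) :
    PB.pair u v h = PB.pair u' v' (hu ▸ hv ▸ h) := by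
  subst hu; subst hv; rfl

theorem TangentCat.c_nat (D : TangentCat C) {A B : C} (f : A ⟶ B) :
    D.T.map (D.T.map f) ≫ D.c.app B = D.c.app A ≫ D.T.map (D.T.map f) :=
  D.c.naturality f

theorem TangentCat.p_nat (D : TangentCat C) {A B : C} (f : A ⟶ B) :
    D.T.map f ≫ D.p.app B = D.p.app A ≫ f :=
  D.p.naturality f

theorem TangentCat.z_nat (D : TangentCat C) {A B : C} (f : A ⟶ B) :
    f ≫ D.zero.app B = D.zero.app A ≫ D.T.map f :=
  D.zero.naturality f

/-- `c ≫ T(p) = p`. -/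
theorem TangentCat.c_Tp (D : TangentCat C) (A : C) :
    D.c.app A ≫ D.T.map (D.p.app A) = D.p.app (D.T.obj A) := by
  rw [← D.c_p, ← Category.assoc, D.c_c]; simp

/-- `ℓ_T ≫ T(c) = c ≫ T(ℓ) ≫ c`. -/
theorem TangentCat.lT_Tc (D : TangentCat C) (A : C) :
    D.l.app (D.T.obj A) ≫ D.T.map (D.c.app A)
      = D.c.app A ≫ D.T.map (D.l.app A) ≫ D.c.app (D.T.obj A) := by
  calc D.l.app (D.T.obj A) ≫ D.T.map (D.c.app A)
      = (D.l.app (D.T.obj A) ≫ D.T.map (D.c.app A) ≫ D.c.app (D.T.obj A))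
          ≫ D.c.app (D.T.obj A) := by
        simp only [Category.assoc, D.c_c]; simp
    _ = D.c.app A ≫ D.T.map (D.l.app A) ≫ D.c.app (D.T.obj A) := by
        rw [D.l_T_c]; simp only [Category.assoc]

/-- `c ≫ ℓ_T = T(ℓ) ≫ c ≫ T(c)`. -/
theorem TangentCat.c_lT (D : TangentCat C) (A : C) :
    D.c.app A ≫ D.l.app (D.T.obj A)
      = D.T.map (D.l.app A) ≫ D.c.app (D.T.obj A) ≫ D.T.map (D.c.app A) := by
  have h1 : D.T.map (D.c.app A) ≫ D.T.map (D.c.app A) = 𝟙 _ := by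
    rw [← D.T.map_comp, D.c_c]; simp
  have h2 : D.l.app (D.T.obj A)
      = D.c.app A ≫ D.T.map (D.l.app A) ≫ D.c.app (D.T.obj A) ≫ D.T.map (D.c.app A) := by
    calc D.l.app (D.T.obj A)
        = (D.l.app (D.T.obj A) ≫ D.T.map (D.c.app A)) ≫ D.T.map (D.c.app A) := by
          rw [Category.assoc, h1]; simp
      _ = _ := by rw [D.lT_Tc]; simp only [Category.assoc]
  rw [h2, ← Category.assoc, D.c_c]; simp

/-- If `(K,H)` is a connection on a differential bundle `𝗊`,
then `(cT(K), (c × 1)T(H)c)` is a connection on the differential bundle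
`T(𝗊)`.  Here `P'` is the chosen pullback `T²(M) ×_{T(M)} T(E)` of `p_{T(M)}`
along `T(q)`, `W = c × 1 : P' → T(T(M) ×_M E)`, and `mu'` is the map `μ` of
the bundle `T(𝗊)`, i.e. `⟨π₀ T(λ)c, π₁ 0⟩ T²(+_q)` on `T(E₂)`. -/
theorem stmt13 (D : TangentCat C) {E M : C} (B : DiffBundle D E M)
    (K : D.T.obj E ⟶ E) (H : B.P.P ⟶ D.T.obj E) (hconn : IsConnection B K H)
    (P' : ChosenPB (D.p.app (D.T.obj M)) (D.T.map B.q)) (TP' : PBLift D.T P')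
    (TEP' : PBLift D.T B.TE2.toChosenPB)
    (mu' : D.T.obj B.E2.P ⟶ D.T.obj (D.T.obj E))
    (hmu' : ∃ w : D.T.obj B.E2.P ⟶ D.T.obj (D.T.obj B.E2.P),
      w ≫ D.T.map (D.T.map B.E2.pr0)
          = D.T.map B.E2.pr0 ≫ D.T.map B.lam ≫ D.c.app E ∧
      w ≫ D.T.map (D.T.map B.E2.pr1)
          = D.T.map B.E2.pr1 ≫ D.zero.app (D.T.obj E) ∧
      mu' = w ≫ D.T.map (D.T.map B.addq))
    (W : P'.P ⟶ D.T.obj B.P.P)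
    (hW0 : W ≫ D.T.map B.P.pr0 = P'.pr0 ≫ D.c.app M)
    (hW1 : W ≫ D.T.map B.P.pr1 = P'.pr1) :
    IsConnectionPair D (D.T.map B.q) (D.T.map B.lam ≫ D.c.app E)
      B.TE2.toChosenPB (D.T.map B.zeroq) mu' P'
      (D.c.app E ≫ D.T.map K) (W ≫ D.T.map H ≫ D.c.app E) := by
  unfold IsConnection IsConnectionPair IsVerticalConnection IsHorizontalConnection at hconn
  obtain ⟨⟨hKlam, hKq, hKl, hKc⟩, ⟨hHTq, hHp, ⟨w1, hw10, hw11, hw1H⟩,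
    ⟨w2, hw20, hw21, hw2H⟩⟩, hHK, R, hR0, hR1, hsum⟩ := hconn
  obtain ⟨wmu, hwmu0, hwmu1, hmuspec⟩ := B.mu_spec
  obtain ⟨wmu', hwmu'0, hwmu'1, hmu'spec⟩ := hmu'
  unfold IsConnectionPair IsVerticalConnection IsHorizontalConnection
  refine ⟨⟨?_, ?_, ?_, ?_⟩, ⟨?_, ?_, ?_, ?_⟩, ?_, ?_⟩
  · -- λ' ≫ K' = 1
    rw [Category.assoc, ← Category.assoc (D.c.app E) (D.c.app E) (D.T.map K), D.c_c]
    simp [← D.T.map_comp, hKlam]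
  · -- K' ≫ q' = p ≫ q'
    rw [Category.assoc, ← D.T.map_comp, hKq, D.T.map_comp, ← Category.assoc, D.c_Tp]
  · -- K' ≫ λ' = ℓ ≫ T(K')
    rw [D.T.map_comp]
    calc (D.c.app E ≫ D.T.map K) ≫ D.T.map B.lam ≫ D.c.app E
        = D.c.app E ≫ D.T.map (K ≫ B.lam) ≫ D.c.app E := by
          rw [D.T.map_comp]; simp only [Category.assoc]
      _ = D.c.app E ≫ (D.T.map (D.l.app E) ≫ D.T.map (D.T.map K)) ≫ D.c.app E := by
          rw [hKl, D.T.map_comp]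
      _ = (D.c.app E ≫ D.T.map (D.l.app E) ≫ D.c.app (D.T.obj E)) ≫ D.T.map (D.T.map K) := by
          slice_lhs 3 4 => rw [D.c_nat K]
          simp only [Category.assoc]
      _ = D.l.app (D.T.obj E) ≫ D.T.map (D.c.app E) ≫ D.T.map (D.T.map K) := by
          rw [← D.lT_Tc]; simp only [Category.assoc]
  · -- K' ≫ λ' = T(λ') ≫ c ≫ T(K')
    rw [D.T.map_comp, D.T.map_comp]
    calc (D.c.app E ≫ D.T.map K) ≫ D.T.map B.lam ≫ D.c.app E
        = D.c.app E ≫ D.T.map (K ≫ B.lam) ≫ D.c.app E := by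
          rw [D.T.map_comp]; simp only [Category.assoc]
      _ = D.c.app E ≫ (D.T.map (D.T.map B.lam) ≫ D.T.map (D.c.app E)
            ≫ D.T.map (D.T.map K)) ≫ D.c.app E := by
          rw [hKc, D.T.map_comp, D.T.map_comp]
      _ = D.c.app E ≫ D.T.map (D.T.map B.lam) ≫ D.T.map (D.c.app E)
            ≫ D.c.app (D.T.obj E) ≫ D.T.map (D.T.map K) := by
          slice_lhs 4 5 => rw [D.c_nat K]
          try simp only [Category.assoc]
      _ = D.T.map (D.T.map B.lam) ≫ (D.c.app (D.T.obj E) ≫ D.T.map (D.c.app E)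
            ≫ D.c.app (D.T.obj E)) ≫ D.T.map (D.T.map K) := by
          slice_lhs 1 2 => rw [← D.c_nat B.lam]
          try simp only [Category.assoc]
      _ = (D.T.map (D.T.map B.lam) ≫ D.T.map (D.c.app E)) ≫ D.c.app (D.T.obj E)
            ≫ D.T.map (D.c.app E) ≫ D.T.map (D.T.map K) := by
          rw [D.c_T_c]
          try simp only [Category.assoc]
  · -- H' ≫ T(q') = pr0
    calc (W ≫ D.T.map H ≫ D.c.app E) ≫ D.T.map (D.T.map B.q)
        = W ≫ D.T.map H ≫ D.T.map (D.T.map B.q) ≫ D.c.app M := by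
          slice_lhs 3 4 => rw [← D.c_nat B.q]
          try simp only [Category.assoc]
      _ = W ≫ D.T.map B.P.pr0 ≫ D.c.app M := by
          slice_lhs 2 3 => rw [← D.T.map_comp, hHTq]
      _ = P'.pr0 := by
          rw [← Category.assoc, hW0, Category.assoc, D.c_c, Category.comp_id]
  · -- H' ≫ p = pr1
    calc (W ≫ D.T.map H ≫ D.c.app E) ≫ D.p.app (D.T.obj E)
        = W ≫ D.T.map H ≫ D.T.map (D.p.app E) := by
          slice_lhs 3 4 => rw [D.c_p]
      _ = P'.pr1 := by rw [← D.T.map_comp, hHp, hW1]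
  · -- linearity w.r.t. ℓ
    have hL : (P'.pr0 ≫ D.l.app (D.T.obj M)) ≫ D.T.map (D.p.app (D.T.obj M))
        = (P'.pr1 ≫ D.zero.app (D.T.obj E)) ≫ D.T.map (D.T.map B.q) := by
      have hA : (P'.pr0 ≫ D.l.app (D.T.obj M)) ≫ D.T.map (D.p.app (D.T.obj M))
          = P'.pr1 ≫ D.T.map B.q ≫ D.zero.app (D.T.obj M) := by
        rw [Category.assoc, D.l_Tp, ← Category.assoc, P'.comm, Category.assoc]
      have hB : (P'.pr1 ≫ D.zero.app (D.T.obj E)) ≫ D.T.map (D.T.map B.q)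
          = P'.pr1 ≫ D.T.map B.q ≫ D.zero.app (D.T.obj M) := by
        rw [Category.assoc, ← D.z_nat (D.T.map B.q)]
        try simp only [Functor.id_obj]
      exact hA.trans hB.symm
    refine ⟨TP'.pair _ _ hL, TP'.pair_pr0 _ _ hL, TP'.pair_pr1 _ _ hL, ?_⟩
    have hkey : TP'.pair _ _ hL ≫ D.T.map W = W ≫ D.T.map w1 ≫ D.c.app B.P.P := by
      refine (B.TPn 2).hom_ext _ _ ?_ ?_
      · show (TP'.pair _ _ hL ≫ D.T.map W) ≫ D.T.map (D.T.map B.P.pr0)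
            = (W ≫ D.T.map w1 ≫ D.c.app B.P.P) ≫ D.T.map (D.T.map B.P.pr0)
        have h1 : (TP'.pair _ _ hL ≫ D.T.map W) ≫ D.T.map (D.T.map B.P.pr0)
            = P'.pr0 ≫ D.c.app M ≫ D.T.map (D.l.app M) ≫ D.c.app (D.T.obj M) := by
          rw [Category.assoc, ← D.T.map_comp, hW0, D.T.map_comp, ← Category.assoc,
            TP'.pair_pr0, Category.assoc, D.lT_Tc]
        have h2 : (W ≫ D.T.map w1 ≫ D.c.app B.P.P) ≫ D.T.map (D.T.map B.P.pr0)
            = P'.pr0 ≫ D.c.app M ≫ D.T.map (D.l.app M) ≫ D.c.app (D.T.obj M) := by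
          simp only [Category.assoc]
          slice_lhs 3 4 => rw [← D.c_nat B.P.pr0]
          slice_lhs 2 3 => rw [← D.T.map_comp, hw10, D.T.map_comp]
          try simp only [Category.assoc]
          rw [← Category.assoc, hW0, Category.assoc]
        exact h1.trans h2.symm
      · show (TP'.pair _ _ hL ≫ D.T.map W) ≫ D.T.map (D.T.map B.P.pr1)
            = (W ≫ D.T.map w1 ≫ D.c.app B.P.P) ≫ D.T.map (D.T.map B.P.pr1)
        have h1 : (TP'.pair _ _ hL ≫ D.T.map W) ≫ D.T.map (D.T.map B.P.pr1)
            = P'.pr1 ≫ D.zero.app (D.T.obj E) := by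
          rw [Category.assoc, ← D.T.map_comp, hW1, TP'.pair_pr1]
        have h2 : (W ≫ D.T.map w1 ≫ D.c.app B.P.P) ≫ D.T.map (D.T.map B.P.pr1)
            = P'.pr1 ≫ D.zero.app (D.T.obj E) := by
          simp only [Category.assoc]
          slice_lhs 3 4 => rw [← D.c_nat B.P.pr1]
          slice_lhs 2 3 => rw [← D.T.map_comp, hw11, D.T.map_comp]
          slice_lhs 3 4 => rw [D.c_zero]
          try simp only [Category.assoc]
          rw [← Category.assoc, hW1]
        exact h1.trans h2.symm
    calc (W ≫ D.T.map H ≫ D.c.app E) ≫ D.l.app (D.T.obj E)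
        = W ≫ D.T.map H ≫ D.T.map (D.l.app E) ≫ D.c.app (D.T.obj E)
            ≫ D.T.map (D.c.app E) := by
          simp only [Category.assoc]; rw [D.c_lT E]
      _ = W ≫ D.T.map w1 ≫ D.T.map (D.T.map H) ≫ D.c.app (D.T.obj E)
            ≫ D.T.map (D.c.app E) := by
          slice_lhs 2 3 => rw [← D.T.map_comp, hw1H, D.T.map_comp]
          try simp only [Category.assoc]
      _ = (W ≫ D.T.map w1 ≫ D.c.app B.P.P) ≫ D.T.map (D.T.map H)
            ≫ D.T.map (D.c.app E) := by
          slice_lhs 3 4 => rw [D.c_nat H]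
          try simp only [Category.assoc]
      _ = (TP'.pair _ _ hL ≫ D.T.map W) ≫ D.T.map (D.T.map H)
            ≫ D.T.map (D.c.app E) := by rw [hkey]
      _ = TP'.pair _ _ hL ≫ D.T.map (W ≫ D.T.map H ≫ D.c.app E) := by
          rw [D.T.map_comp, D.T.map_comp]; simp only [Category.assoc]
  · -- linearity w.r.t. λ'
    have hL2 : (P'.pr0 ≫ D.zero.app (D.T.obj (D.T.obj M))) ≫ D.T.map (D.p.app (D.T.obj M))
        = (P'.pr1 ≫ D.T.map B.lam ≫ D.c.app E) ≫ D.T.map (D.T.map B.q) := by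
      have hA : (P'.pr0 ≫ D.zero.app (D.T.obj (D.T.obj M))) ≫ D.T.map (D.p.app (D.T.obj M))
          = P'.pr1 ≫ D.T.map B.q ≫ D.zero.app (D.T.obj M) := by
        rw [Category.assoc, ← D.z_nat (D.p.app (D.T.obj M)), ← Category.assoc, P'.comm,
          Category.assoc]
        try simp only [Functor.id_obj]
      have hB : (P'.pr1 ≫ D.T.map B.lam ≫ D.c.app E) ≫ D.T.map (D.T.map B.q)
          = P'.pr1 ≫ D.T.map B.q ≫ D.zero.app (D.T.obj M) := by
        simp only [Category.assoc]
        slice_lhs 3 4 => rw [← D.c_nat B.q]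
        slice_lhs 2 3 => rw [← D.T.map_comp, B.lam_Tq, D.T.map_comp]
        slice_lhs 3 4 => rw [D.c_zero]
        try simp only [Category.assoc]
      exact hA.trans hB.symm
    refine ⟨TP'.pair _ _ hL2, TP'.pair_pr0 _ _ hL2, TP'.pair_pr1 _ _ hL2, ?_⟩
    have hkey2 : TP'.pair _ _ hL2 ≫ D.T.map W = W ≫ D.T.map w2 ≫ D.c.app B.P.P := by
      refine (B.TPn 2).hom_ext _ _ ?_ ?_
      · show (TP'.pair _ _ hL2 ≫ D.T.map W) ≫ D.T.map (D.T.map B.P.pr0)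
            = (W ≫ D.T.map w2 ≫ D.c.app B.P.P) ≫ D.T.map (D.T.map B.P.pr0)
        have h1 : (TP'.pair _ _ hL2 ≫ D.T.map W) ≫ D.T.map (D.T.map B.P.pr0)
            = P'.pr0 ≫ D.c.app M ≫ D.zero.app (D.T.obj (D.T.obj M)) := by
          rw [Category.assoc, ← D.T.map_comp, hW0, D.T.map_comp, ← Category.assoc,
            TP'.pair_pr0, Category.assoc,
            ← D.z_nat (show D.T.obj (D.T.obj M) ⟶ D.T.obj (D.T.obj M) from D.c.app M)]
          try simp only [Functor.id_obj]
        have h2 : (W ≫ D.T.map w2 ≫ D.c.app B.P.P) ≫ D.T.map (D.T.map B.P.pr0)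
            = P'.pr0 ≫ D.c.app M ≫ D.zero.app (D.T.obj (D.T.obj M)) := by
          simp only [Category.assoc]
          slice_lhs 3 4 => rw [← D.c_nat B.P.pr0]
          slice_lhs 2 3 => rw [← D.T.map_comp, hw20, D.T.map_comp]
          slice_lhs 3 4 => rw [D.c_zero]
          try simp only [Category.assoc]
          rw [← Category.assoc, hW0, Category.assoc]
        exact h1.trans h2.symm
      · show (TP'.pair _ _ hL2 ≫ D.T.map W) ≫ D.T.map (D.T.map B.P.pr1)
            = (W ≫ D.T.map w2 ≫ D.c.app B.P.P) ≫ D.T.map (D.T.map B.P.pr1)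
        have h1 : (TP'.pair _ _ hL2 ≫ D.T.map W) ≫ D.T.map (D.T.map B.P.pr1)
            = P'.pr1 ≫ D.T.map B.lam ≫ D.c.app E := by
          rw [Category.assoc, ← D.T.map_comp, hW1, TP'.pair_pr1]
        have h2 : (W ≫ D.T.map w2 ≫ D.c.app B.P.P) ≫ D.T.map (D.T.map B.P.pr1)
            = P'.pr1 ≫ D.T.map B.lam ≫ D.c.app E := by
          simp only [Category.assoc]
          slice_lhs 3 4 => rw [← D.c_nat B.P.pr1]
          slice_lhs 2 3 => rw [← D.T.map_comp, hw21, D.T.map_comp]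
          try simp only [Category.assoc]
          rw [← Category.assoc, hW1]
        exact h1.trans h2.symm
    calc (W ≫ D.T.map H ≫ D.c.app E)
          ≫ D.T.map (D.T.map B.lam ≫ D.c.app E) ≫ D.c.app (D.T.obj E)
        = W ≫ D.T.map H ≫ D.c.app E ≫ D.T.map (D.T.map B.lam)
            ≫ D.T.map (D.c.app E) ≫ D.c.app (D.T.obj E) := by
          rw [D.T.map_comp]; simp only [Category.assoc]
      _ = W ≫ D.T.map H ≫ D.T.map (D.T.map B.lam) ≫ D.c.app (D.T.obj E)
            ≫ D.T.map (D.c.app E) ≫ D.c.app (D.T.obj E) := by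
          slice_lhs 3 4 => rw [← D.c_nat B.lam]
          try simp only [Category.assoc]
      _ = W ≫ D.T.map H ≫ D.T.map (D.T.map B.lam) ≫ D.T.map (D.c.app E)
            ≫ D.c.app (D.T.obj E) ≫ D.T.map (D.c.app E) := by
          rw [D.c_T_c]
      _ = W ≫ D.T.map w2 ≫ D.T.map (D.T.map H)
            ≫ D.c.app (D.T.obj E) ≫ D.T.map (D.c.app E) := by
          slice_lhs 2 4 => rw [← D.T.map_comp, ← D.T.map_comp, hw2H, D.T.map_comp]
          try simp only [Category.assoc]
      _ = (W ≫ D.T.map w2 ≫ D.c.app B.P.P) ≫ D.T.map (D.T.map H)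
            ≫ D.T.map (D.c.app E) := by
          slice_lhs 3 4 => rw [D.c_nat H]
          try simp only [Category.assoc]
      _ = (TP'.pair _ _ hL2 ≫ D.T.map W) ≫ D.T.map (D.T.map H)
            ≫ D.T.map (D.c.app E) := by rw [hkey2]
      _ = TP'.pair _ _ hL2 ≫ D.T.map (W ≫ D.T.map H ≫ D.c.app E) := by
          rw [D.T.map_comp, D.T.map_comp]; simp only [Category.assoc]
  · -- H' ≫ K' = pr1 ≫ q' ≫ 0'
    calc (W ≫ D.T.map H ≫ D.c.app E) ≫ D.c.app E ≫ D.T.map K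
        = W ≫ D.T.map H ≫ D.T.map K := by
          slice_lhs 3 4 => rw [D.c_c]
          simp only [Category.assoc, Category.id_comp]
      _ = W ≫ D.T.map B.P.pr1 ≫ D.T.map B.q ≫ D.T.map B.zeroq := by
          rw [← D.T.map_comp, hHK, D.T.map_comp, D.T.map_comp]
      _ = P'.pr1 ≫ D.T.map B.q ≫ D.T.map B.zeroq := by
          rw [← Category.assoc, hW1]
  · -- the sum condition
    have hh : (B.E2.pr0 ≫ B.q ≫ B.zeroq) ≫ B.q = B.E2.pr1 ≫ B.q := by
      simp only [Category.assoc]; rw [B.zeroq_q, Category.comp_id, B.E2.comm]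
    have hwp : wmu ≫ D.p.app B.E2.P
        = B.E2.pair (B.E2.pr0 ≫ B.q ≫ B.zeroq) B.E2.pr1 hh := by
      refine B.E2.hom_ext _ _ ?_ ?_
      · rw [Category.assoc, ← D.p_nat B.E2.pr0, ← Category.assoc, hwmu0, Category.assoc,
          B.lam_p, B.E2.pair_pr0]
      · rw [Category.assoc, ← D.p_nat B.E2.pr1, ← Category.assoc, hwmu1, Category.assoc,
          D.zero_p, Category.comp_id, B.E2.pair_pr1]
    have hpr : B.E2.pr0 ≫ B.q ≫ B.zeroq = B.E2.pr1 ≫ B.q ≫ B.zeroq := by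
      rw [← Category.assoc, B.E2.comm, Category.assoc]
    have hmup : B.mu ≫ D.p.app E = B.E2.pr1 := by
      rw [hmuspec, Category.assoc, D.p_nat B.addq, ← Category.assoc, hwp, B.addq_comm,
        B.E2.pair_congr rfl hpr]
      exact B.addq_zero _ _
    have hwmu'' : wmu' = D.T.map wmu ≫ D.c.app B.E2.P := by
      refine TEP'.hom_ext _ _ ?_ ?_
      · show wmu' ≫ D.T.map (D.T.map B.E2.pr0)
            = (D.T.map wmu ≫ D.c.app B.E2.P) ≫ D.T.map (D.T.map B.E2.pr0)
        have hx : (D.T.map wmu ≫ D.c.app B.E2.P) ≫ D.T.map (D.T.map B.E2.pr0)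
            = D.T.map B.E2.pr0 ≫ D.T.map B.lam ≫ D.c.app E := by
          simp only [Category.assoc]
          slice_lhs 2 3 => rw [← D.c_nat B.E2.pr0]
          slice_lhs 1 2 => rw [← D.T.map_comp, hwmu0, D.T.map_comp]
          try simp only [Category.assoc]
        rw [hwmu'0, hx]
      · show wmu' ≫ D.T.map (D.T.map B.E2.pr1)
            = (D.T.map wmu ≫ D.c.app B.E2.P) ≫ D.T.map (D.T.map B.E2.pr1)
        have hy : (D.T.map wmu ≫ D.c.app B.E2.P) ≫ D.T.map (D.T.map B.E2.pr1)
            = D.T.map B.E2.pr1 ≫ D.zero.app (D.T.obj E) := by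
          simp only [Category.assoc]
          slice_lhs 2 3 => rw [← D.c_nat B.E2.pr1]
          slice_lhs 1 2 => rw [← D.T.map_comp, hwmu1, D.T.map_comp]
          slice_lhs 2 3 => rw [D.c_zero]
          try simp only [Category.assoc]
        rw [hwmu'1, hy]
    have hmu'c : mu' = D.T.map B.mu ≫ D.c.app E := by
      rw [hmu'spec, hwmu'', hmuspec, D.T.map_comp, Category.assoc, Category.assoc,
        ← D.c_nat B.addq]
    have hU0 : D.hdesc B.q B.P ≫ B.P.pr0 = D.T.map B.q := B.P.pair_pr0 _ _ _
    have hU1 : D.hdesc B.q B.P ≫ B.P.pr1 = D.p.app E := B.P.pair_pr1 _ _ _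
    have hU0' : D.hdesc (D.T.map B.q) P' ≫ P'.pr0 = D.T.map (D.T.map B.q) :=
      P'.pair_pr0 _ _ _
    have hU1' : D.hdesc (D.T.map B.q) P' ≫ P'.pr1 = D.p.app (D.T.obj E) :=
      P'.pair_pr1 _ _ _
    have hUc : D.c.app E ≫ D.T.map (D.hdesc B.q B.P) = D.hdesc (D.T.map B.q) P' ≫ W := by
      refine B.TP.hom_ext _ _ ?_ ?_
      · rw [Category.assoc, ← D.T.map_comp, hU0, Category.assoc, hW0, ← Category.assoc,
          hU0', D.c_nat B.q]
      · rw [Category.assoc, ← D.T.map_comp, hU1, D.c_Tp, Category.assoc, hW1, hU1']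
    have hUHp : (D.hdesc B.q B.P ≫ H) ≫ D.p.app E = D.p.app E := by
      rw [Category.assoc, hHp, hU1]
    have hRmup : (R ≫ B.mu) ≫ D.p.app E = (D.hdesc B.q B.P ≫ H) ≫ D.p.app E := by
      rw [Category.assoc, hmup, hR1, hUHp]
    have hsum' : (D.T2 E).pair (R ≫ B.mu) (D.hdesc B.q B.P ≫ H) hRmup ≫ D.add E
        = 𝟙 (D.T.obj E) := by
      unfold TangentCat.hadd at hsum
      rw [dif_pos hRmup] at hsum
      exact hsum
    have hTp_eq : (D.c.app E ≫ D.T.map (R ≫ B.mu)) ≫ D.T.map (D.p.app E)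
        = (D.c.app E ≫ D.T.map (D.hdesc B.q B.P ≫ H)) ≫ D.T.map (D.p.app E) := by
      rw [Category.assoc, ← D.T.map_comp, hRmup, D.T.map_comp, ← Category.assoc]
    have hp_eq : ((D.c.app E ≫ D.T.map (R ≫ B.mu)) ≫ D.c.app E) ≫ D.p.app (D.T.obj E)
        = ((D.c.app E ≫ D.T.map (D.hdesc B.q B.P ≫ H)) ≫ D.c.app E)
            ≫ D.p.app (D.T.obj E) := by
      simp only [Category.assoc, D.c_p]
      simpa only [Category.assoc] using hTp_eq
    obtain ⟨w, hwa, hwb, hwadd⟩ := D.c_add E _ _ hTp_eq hp_eq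
    have hw0 : w = D.c.app E
        ≫ D.T.map ((D.T2 E).pair (R ≫ B.mu) (D.hdesc B.q B.P ≫ H) hRmup) := by
      refine (D.T2T E).hom_ext _ _ ?_ ?_
      · rw [hwa, Category.assoc, ← D.T.map_comp, (D.T2 E).pair_pr0]
      · rw [hwb, Category.assoc, ← D.T.map_comp, (D.T2 E).pair_pr1]
    have hfinal : (D.T2 (D.T.obj E)).pair _ _ hp_eq ≫ D.add (D.T.obj E)
        = 𝟙 (D.T.obj (D.T.obj E)) := by
      rw [← hwadd, hw0]
      simp only [Category.assoc]
      slice_lhs 2 3 => rw [← D.T.map_comp, hsum', D.T.map_id]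
      simp [D.c_c]
    refine ⟨D.c.app E ≫ D.T.map R, ?_, ?_, ?_⟩
    · show (D.c.app E ≫ D.T.map R) ≫ D.T.map B.E2.pr0 = D.c.app E ≫ D.T.map K
      rw [Category.assoc, ← D.T.map_comp, hR0]
    · show (D.c.app E ≫ D.T.map R) ≫ D.T.map B.E2.pr1 = D.p.app (D.T.obj E)
      rw [Category.assoc, ← D.T.map_comp, hR1, D.c_Tp]
    · have e1 : (D.c.app E ≫ D.T.map R) ≫ mu'
          = (D.c.app E ≫ D.T.map (R ≫ B.mu)) ≫ D.c.app E := by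
        rw [hmu'c, D.T.map_comp]; simp only [Category.assoc]
      have e2 : D.hdesc (D.T.map B.q) P' ≫ W ≫ D.T.map H ≫ D.c.app E
          = (D.c.app E ≫ D.T.map (D.hdesc B.q B.P ≫ H)) ≫ D.c.app E := by
        rw [D.T.map_comp]
        slice_rhs 1 2 => rw [hUc]
        simp only [Category.assoc]
      exact (congrArg₂ (fun f g => D.hadd f g) e1 e2).trans (by
        unfold TangentCat.hadd
        rw [dif_pos hp_eq]
        exact hfinal)
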